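/- Let (Ω, F, P) be a probability space with a filtration (F_l)_{l=0}^T, let (Y_l)_{l=0}^T be an adapted, integrable, bounded real-valued process, and let (U_l)_{l=0}^T be its Snell envelope. Then (U_l) is the smallest supermartingale dominating (Y_l): if (Z_l)_{l=0}^T is any supermartingale with respect to (F_l) satisfying Z_l ≥ Y_l almost surely for all l, then Z_l ≥ U_l almost surely for all l. -/
import Mathlib


open MeasureTheory

/-- The Snell envelope is the smallest supermartingale dominating the reward process: if
`Z` is adapted, integrable, satisfies the supermartingale inequality
`E[Z (l+1) | F l] ≤ Z l` a.s. for `l < T`, and dominates `Y` (`Z l ≥ Y l` a.s. for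
`l ≤ T`), then `Z l ≥ U l` a.s. for all `l ≤ T`. -/
theorem snell_envelope_smallest_dominating_supermartingale
    {Ω : Type*} [m0 : MeasurableSpace Ω] (μ : Measure Ω) [IsProbabilityMeasure μ]
    (ℱ : MeasureTheory.Filtration ℕ m0)
    (T : ℕ) (Y : ℕ → Ω → ℝ)
    (hadapted : ∀ l, l ≤ T → StronglyMeasurable[ℱ l] (Y l))
    (hint : ∀ l, l ≤ T → Integrable (Y l) μ)
    (hbdd : ∃ C, ∀ l ω, |Y l ω| ≤ C)
    (U : ℕ → Ω → ℝ)
    (hUT : U T = Y T)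
    (hUrec : ∀ l, l < T → U l = fun ω => max (Y l ω) ((μ[U (l + 1) | ℱ l]) ω))
    (Z : ℕ → Ω → ℝ)
    (hZadapted : ∀ l, l ≤ T → StronglyMeasurable[ℱ l] (Z l))
    (hZint : ∀ l, l ≤ T → Integrable (Z l) μ)
    (hZsuper : ∀ l, l < T → (μ[Z (l + 1) | ℱ l]) ≤ᵐ[μ] Z l)
    (hZdom : ∀ l, l ≤ T → ∀ᵐ ω ∂μ, Y l ω ≤ Z l ω) :
    ∀ l, l ≤ T → ∀ᵐ ω ∂μ, U l ω ≤ Z l ω := by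
  have key : ∀ k l, l + k = T → Integrable (U l) μ ∧ (∀ᵐ ω ∂μ, U l ω ≤ Z l ω) := by
    intro k
    induction k with
    | zero =>
      intro l hl
      simp only [Nat.add_zero] at hl
      subst hl
      rw [hUT]
      exact ⟨hint l le_rfl, hZdom l le_rfl⟩
    | succ k ih =>
      intro l hl
      have hlt : l < T := by omega
      have ihl := ih (l + 1) (by omega)
      have hrec := hUrec l hlt
      have hUint : Integrable (U l) μ := by
        rw [hrec]
        exact (hint l hlt.le).sup integrable_condExp
      refine ⟨hUint, ?_⟩
      have hmono : μ[U (l + 1) | ℱ l] ≤ᵐ[μ] μ[Z (l + 1) | ℱ l] :=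
        condExp_mono ihl.1 (hZint (l + 1) (by omega)) ihl.2
      have hsuper := hZsuper l hlt
      have hdom := hZdom l hlt.le
      filter_upwards [hmono, hsuper, hdom] with ω h1 h2 h3
      rw [hrec]
      exact max_le h3 (le_trans h1 h2)
  intro l hl
  exact (key (T - l) l (by omega)).2
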